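/- Let A, B : Ω → L(H) be compatible observables and let C : Ω×Ω → L(H) be a joint observable of A and B. If there exist two distinct pairs (x₁,y₁) ≠ (x₂,y₂) in Ω×Ω such that ran C(x₁,y₁) ∩ ran C(x₂,y₂) ≠ {0}, then the pair (A, B) is not an extreme point of the convex set CO(Ω) of all compatible pairs of observables. -/

import Mathlib

open scoped InnerProductSpace

noncomputable section

variable {H : Type*} [NormedAddCommGroup H] [InnerProductSpace ℂ H] [FiniteDimensional ℂ H]
variable {Ω : Type*} [Fintype Ω]

/-- An observable with outcome set `Ω`: positive semidefinite operators summing to `1`. -/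
def IsObservable {Ω H : Type*} [Fintype Ω] [NormedAddCommGroup H] [InnerProductSpace ℂ H]
    [CompleteSpace H] (A : Ω → H →L[ℂ] H) : Prop :=
  (∀ x, (A x).IsPositive) ∧ (∑ x, A x) = 1

/-- `C` is a joint observable of `A` and `B`. -/
def IsJointObservable {Ω H : Type*} [Fintype Ω] [NormedAddCommGroup H] [InnerProductSpace ℂ H]
    [CompleteSpace H] (C : Ω × Ω → H →L[ℂ] H) (A B : Ω → H →L[ℂ] H) : Prop :=
  IsObservable C ∧ (∀ x, (∑ y, C (x, y)) = A x) ∧ (∀ y, (∑ x, C (x, y)) = B y)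

/-- The set of all compatible pairs of observables. -/
def CO (Ω H : Type*) [Fintype Ω] [NormedAddCommGroup H] [InnerProductSpace ℂ H]
    [CompleteSpace H] : Set ((Ω → H →L[ℂ] H) × (Ω → H →L[ℂ] H)) :=
  {AB | ∃ C, IsJointObservable C AB.1 AB.2}

set_option synthInstance.maxHeartbeats 1000000
set_option maxHeartbeats 1000000
set_option linter.unusedSectionVars false

def rankOne (v : H) : H →L[ℂ] H := (innerSL ℂ v).smulRight v

lemma rankOne_apply (v w : H) : rankOne v w = ⟪v, w⟫_ℂ • v := rfl

lemma real_smul_eq_complex_smul (ε : ℝ) (w : H) : ε • w = (ε : ℂ) • w :=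
  (algebraMap_smul ℂ ε w).symm

lemma rankOne_isPositive (v : H) : (rankOne v).IsPositive := by
  constructor
  · intro a b
    simp only [ContinuousLinearMap.coe_coe, rankOne_apply, inner_smul_left, inner_smul_right]
    rw [← inner_conj_symm v a]
    simp only [Complex.conj_conj]
    ring
  · intro w
    simp only [ContinuousLinearMap.reApplyInnerSelf, rankOne_apply, inner_smul_left]
    rw [← Complex.normSq_eq_conj_mul_self]
    simp [Complex.normSq_nonneg]

lemma isPositive_real_smul {T : H →L[ℂ] H} (hT : T.IsPositive) {ε : ℝ} (hε : 0 ≤ ε) :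
    (ε • T).IsPositive := by
  have hsymm := hT.1
  constructor
  · intro a b
    have h := hsymm a b
    simp only [ContinuousLinearMap.coe_coe, ContinuousLinearMap.smul_apply] at *
    rw [real_smul_eq_complex_smul, real_smul_eq_complex_smul, inner_smul_left,
      inner_smul_right, h, Complex.conj_ofReal]
  · intro w
    simp only [ContinuousLinearMap.reApplyInnerSelf, ContinuousLinearMap.smul_apply]
    rw [real_smul_eq_complex_smul, inner_smul_left, Complex.conj_ofReal]
    show 0 ≤ ((ε : ℂ) * ⟪T w, w⟫_ℂ).re
    rw [Complex.re_ofReal_mul]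
    exact mul_nonneg hε (hT.2 w)

theorem cs_pos {T : H →L[ℂ] H} (hT : T.IsPositive) (x y : H) :
    ‖(⟪T x, y⟫_ℂ)‖ ^ 2 ≤ Complex.re ⟪T x, x⟫_ℂ * Complex.re ⟪T y, y⟫_ℂ := by
  have hsymm := hT.1
  have hs : ∀ a b : H, ⟪T a, b⟫_ℂ = ⟪a, T b⟫_ℂ := fun a b => hsymm a b
  have hpos : ∀ z, 0 ≤ Complex.re ⟪T z, z⟫_ℂ := hT.2
  by_cases h0 : ⟪T x, y⟫_ℂ = 0
  · rw [h0]
    simpa using mul_nonneg (hpos x) (hpos y)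
  · set r : ℝ := ‖(⟪T x, y⟫_ℂ)‖ with hr
    have hrpos : 0 < r := norm_pos_iff.mpr h0
    have hrC : (r : ℂ) ≠ 0 := by exact_mod_cast hrpos.ne'
    set c : ℂ := ⟪T x, y⟫_ℂ / r with hc
    have hcnorm : ‖c‖ = 1 := by
      rw [hc, norm_div, ← hr]
      rw [show ‖((r : ℝ) : ℂ)‖ = r from by simp [abs_of_pos hrpos]]
      exact div_self hrpos.ne'
    set x' : H := c • x with hx'
    have hnsq : (Complex.normSq ⟪T x, y⟫_ℂ : ℂ) = (r : ℂ) * (r : ℂ) := by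
      rw [Complex.normSq_eq_norm_sq, ← hr]
      push_cast; ring
    have h1 : ⟪T x', y⟫_ℂ = (r : ℂ) := by
      rw [hx', map_smul, inner_smul_left, hc, map_div₀, Complex.conj_ofReal,
        div_mul_eq_mul_div, ← Complex.normSq_eq_conj_mul_self, hnsq]
      field_simp
    have h2 : ⟪T y, x'⟫_ℂ = (r : ℂ) := by
      rw [hs y x', ← inner_conj_symm, h1, Complex.conj_ofReal]
    have h3 : Complex.re ⟪T x', x'⟫_ℂ = Complex.re ⟪T x, x⟫_ℂ := by
      have hnsq1 : Complex.normSq c = 1 := by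
        rw [Complex.normSq_eq_norm_sq, hcnorm, one_pow]
      rw [hx', map_smul, inner_smul_left, inner_smul_right, ← mul_assoc,
        ← Complex.normSq_eq_conj_mul_self, hnsq1]
      simp
    clear_value x'
    have key : ∀ t : ℝ, 0 ≤ Complex.re ⟪T y, y⟫_ℂ * (t * t) + (2 * r) * t
        + Complex.re ⟪T x, x⟫_ℂ := by
      intro t
      have hp := hpos (x' + (t : ℂ) • y)
      have expand : ⟪T (x' + (t : ℂ) • y), x' + (t : ℂ) • y⟫_ℂ
          = ⟪T x', x'⟫_ℂ + (t : ℂ) * (r : ℂ) + (t : ℂ) * (r : ℂ)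
            + (t : ℂ) * (t : ℂ) * ⟪T y, y⟫_ℂ := by
        rw [map_add, map_smul, inner_add_left, inner_add_right, inner_add_right,
          inner_smul_right, inner_smul_left, inner_smul_left, inner_smul_right,
          Complex.conj_ofReal, h1, h2]
        ring
      rw [expand] at hp
      simp only [Complex.add_re, Complex.mul_re, Complex.mul_im, Complex.ofReal_re,
        Complex.ofReal_im, zero_mul, mul_zero, sub_zero, add_zero, zero_add, h3] at hp
      nlinarith [hp]
    have hd := discrim_le_zero key
    rw [discrim] at hd
    nlinarith [hpos x, hpos y, hd]

lemma re_inner_pos_of_ne {T : H →L[ℂ] H} (hT : T.IsPositive) {u : H} (h : T u ≠ 0) :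
    0 < Complex.re ⟪T u, u⟫_ℂ := by
  have hpos : 0 ≤ Complex.re ⟪T u, u⟫_ℂ := hT.2 u
  rcases hpos.eq_or_lt with heq | hlt
  · exfalso
    apply h
    have hcs := cs_pos hT u (T u)
    rw [← heq, zero_mul] at hcs
    have : ‖(⟪T u, T u⟫_ℂ)‖ = 0 := by nlinarith [norm_nonneg (⟪T u, T u⟫_ℂ)]
    rw [norm_eq_zero] at this
    exact inner_self_eq_zero.mp this
  · exact hlt


lemma sub_smul_rankOne_isPositive {T : H →L[ℂ] H} (hT : T.IsPositive) (u : H)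
    {ε : ℝ} (hε : 0 ≤ ε) (hεc : ε * Complex.re ⟪T u, u⟫_ℂ ≤ 1) :
    (T - ε • rankOne (T u)).IsPositive := by
  constructor
  · exact hT.1.sub (isPositive_real_smul (rankOne_isPositive (T u)) hε).1
  · intro w
    show 0 ≤ Complex.re ⟪(T - ε • rankOne (T u)) w, w⟫_ℂ
    rw [ContinuousLinearMap.sub_apply, inner_sub_left, ContinuousLinearMap.smul_apply,
      real_smul_eq_complex_smul, inner_smul_left, Complex.conj_ofReal, Complex.sub_re,
      Complex.re_ofReal_mul]
    have hD : Complex.re ⟪rankOne (T u) w, w⟫_ℂ = ‖(⟪T u, w⟫_ℂ)‖ ^ 2 := by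
      rw [rankOne_apply, inner_smul_left, ← Complex.normSq_eq_conj_mul_self,
        Complex.ofReal_re, Complex.normSq_eq_norm_sq]
    rw [hD]
    have hcs := cs_pos hT u w
    have hw : 0 ≤ Complex.re ⟪T w, w⟫_ℂ := hT.2 w
    have hu : 0 ≤ Complex.re ⟪T u, u⟫_ℂ := hT.2 u
    nlinarith [hcs, hw, hu, hε, hεc]

theorem range_overlap_implies_not_extreme
    (A B : Ω → H →L[ℂ] H) (C : Ω × Ω → H →L[ℂ] H)
    (hA : IsObservable A) (hB : IsObservable B)
    (hC : IsJointObservable C A B)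
    (p₁ p₂ : Ω × Ω) (hne : p₁ ≠ p₂)
    (hran : LinearMap.range (C p₁ : H →ₗ[ℂ] H) ⊓ LinearMap.range (C p₂ : H →ₗ[ℂ] H) ≠ ⊥) :
    (A, B) ∉ Set.extremePoints ℝ (CO Ω H) := by
  classical
  intro hext
  obtain ⟨hmem, hprop⟩ := hext
  obtain ⟨v, hv, hv0⟩ := (Submodule.ne_bot_iff _).mp hran
  rw [Submodule.mem_inf] at hv
  obtain ⟨u₁, hu₁⟩ := LinearMap.mem_range.mp hv.1
  obtain ⟨u₂, hu₂⟩ := LinearMap.mem_range.mp hv.2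
  have hu₁' : C p₁ u₁ = v := hu₁
  have hu₂' : C p₂ u₂ = v := hu₂
  have hCpos : ∀ q, (C q).IsPositive := hC.1.1
  have hv₁ : C p₁ u₁ ≠ 0 := by rw [hu₁']; exact hv0
  have hv₂ : C p₂ u₂ ≠ 0 := by rw [hu₂']; exact hv0
  have hc₁ := re_inner_pos_of_ne (hCpos p₁) hv₁
  have hc₂ := re_inner_pos_of_ne (hCpos p₂) hv₂
  set ε : ℝ := min (Complex.re ⟪C p₁ u₁, u₁⟫_ℂ)⁻¹ (Complex.re ⟪C p₂ u₂, u₂⟫_ℂ)⁻¹ with hεdef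
  have hεpos : 0 < ε := lt_min (inv_pos.mpr hc₁) (inv_pos.mpr hc₂)
  have hε₁ : ε * Complex.re ⟪C p₁ u₁, u₁⟫_ℂ ≤ 1 := by
    calc ε * Complex.re ⟪C p₁ u₁, u₁⟫_ℂ
        ≤ (Complex.re ⟪C p₁ u₁, u₁⟫_ℂ)⁻¹ * Complex.re ⟪C p₁ u₁, u₁⟫_ℂ := by
          gcongr; exact min_le_left _ _
      _ = 1 := inv_mul_cancel₀ hc₁.ne'
  have hε₂ : ε * Complex.re ⟪C p₂ u₂, u₂⟫_ℂ ≤ 1 := by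
    calc ε * Complex.re ⟪C p₂ u₂, u₂⟫_ℂ
        ≤ (Complex.re ⟪C p₂ u₂, u₂⟫_ℂ)⁻¹ * Complex.re ⟪C p₂ u₂, u₂⟫_ℂ := by
          gcongr; exact min_le_right _ _
      _ = 1 := inv_mul_cancel₀ hc₂.ne'
  set D : H →L[ℂ] H := rankOne v with hDdef
  have hεD0 : ε • D ≠ 0 := by
    intro h
    have h2 := congrArg (fun (S : H →L[ℂ] H) => S v) h
    simp only [ContinuousLinearMap.smul_apply, ContinuousLinearMap.zero_apply] at h2
    rw [hDdef, rankOne_apply] at h2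
    rcases smul_eq_zero.mp h2 with h' | h'
    · exact hεpos.ne' h'
    · rcases smul_eq_zero.mp h' with h'' | h''
      · exact inner_self_ne_zero.mpr hv0 h''
      · exact hv0 h''
  have hsub₁ : (C p₁ - ε • D).IsPositive := by
    rw [hDdef, ← hu₁']
    exact sub_smul_rankOne_isPositive (hCpos p₁) u₁ hεpos.le hε₁
  have hsub₂ : (C p₂ - ε • D).IsPositive := by
    rw [hDdef, ← hu₂']
    exact sub_smul_rankOne_isPositive (hCpos p₂) u₂ hεpos.le hε₂
  have haddD : ∀ q, (C q + ε • D).IsPositive := fun q =>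
    (hCpos q).add (isPositive_real_smul (rankOne_isPositive v) hεpos.le)
  set P : Ω × Ω → (H →L[ℂ] H) := fun q =>
    (if q = p₁ then ε • D else 0) + (if q = p₂ then -(ε • D) else 0) with hPdef
  have hPp₁ : P p₁ = ε • D := by simp [hPdef, hne]
  have hPp₂ : P p₂ = -(ε • D) := by simp [hPdef, Ne.symm hne]
  have hPother : ∀ q, q ≠ p₁ → q ≠ p₂ → P q = 0 := by
    intro q h1 h2; simp [hPdef, h1, h2]
  have hPsum : ∑ q, P q = 0 := by
    rw [hPdef, Finset.sum_add_distrib]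
    rw [Finset.sum_ite_eq' Finset.univ p₁ (fun _ => ε • D),
      Finset.sum_ite_eq' Finset.univ p₂ (fun _ => -(ε • D))]
    simp
  -- generic membership lemma
  have mkJoint : ∀ (Q : Ω × Ω → H →L[ℂ] H), (∀ q, (C q + Q q).IsPositive) →
      (∑ q, Q q = 0) →
      ((fun x => A x + ∑ y, Q (x, y)), (fun y => B y + ∑ x, Q (x, y))) ∈ CO Ω H := by
    intro Q hQpos hQsum
    refine ⟨fun q => C q + Q q, ⟨⟨hQpos, ?_⟩, fun x => ?_, fun y => ?_⟩⟩
    · rw [Finset.sum_add_distrib, hC.1.2, hQsum, add_zero]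
    · rw [Finset.sum_add_distrib, hC.2.1 x]
    · rw [Finset.sum_add_distrib, hC.2.2 y]
  have hQpos₁ : ∀ q, (C q + P q).IsPositive := by
    intro q
    by_cases h1 : q = p₁
    · subst h1; rw [hPp₁]; exact haddD q
    by_cases h2 : q = p₂
    · subst h2; rw [hPp₂, ← sub_eq_add_neg]; exact hsub₂
    · rw [hPother q h1 h2, add_zero]; exact hCpos q
  have hQpos₂ : ∀ q, (C q + (fun q' => -(P q')) q).IsPositive := by
    intro q
    by_cases h1 : q = p₁
    · subst h1; simp only [hPp₁, ← sub_eq_add_neg]; exact hsub₁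
    by_cases h2 : q = p₂
    · subst h2; simp only [hPp₂, neg_neg]; exact haddD q
    · simp only [hPother q h1 h2, neg_zero, add_zero]; exact hCpos q
  have hQsum₂ : ∑ q, (fun q' => -(P q')) q = 0 := by
    simp only [Finset.sum_neg_distrib, hPsum, neg_zero]
  have hmem₁ := mkJoint P hQpos₁ hPsum
  have hmem₂ := mkJoint (fun q' => -(P q')) hQpos₂ hQsum₂
  have hseg : (A, B) ∈ openSegment ℝ
      ((fun x => A x + ∑ y, P (x, y)), (fun y => B y + ∑ x, P (x, y)))
      ((fun x => A x + ∑ y, -(P (x, y))), (fun y => B y + ∑ x, -(P (x, y)))) := by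
    refine ⟨1/2, 1/2, by norm_num, by norm_num, by norm_num, ?_⟩
    rw [Prod.smul_mk, Prod.smul_mk, Prod.mk_add_mk, Prod.mk.injEq]
    constructor
    · funext z
      simp only [Pi.add_apply, Pi.smul_apply, Finset.sum_neg_distrib]
      module
    · funext z
      simp only [Pi.add_apply, Pi.smul_apply, Finset.sum_neg_distrib]
      module
  have hx₁ := hprop hmem₁ hmem₂ hseg
  by_cases hxy : p₁.1 = p₂.1
  · have h2 : p₁.2 ≠ p₂.2 := fun h => hne (Prod.ext hxy h)
    have hPB : ∑ x, P (x, p₁.2) = ε • D := by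
      have e1 : ∀ x : Ω, ((x, p₁.2) = p₁) = (x = p₁.1) := fun x => by
        simp [Prod.ext_iff]
      have e2 : ∀ x : Ω, ((x, p₁.2) = p₂) = False := fun x => by
        simp [Prod.ext_iff]; intro _; exact h2
      simp only [hPdef, e1, e2, if_false, Finset.sum_add_distrib,
        Finset.sum_ite_eq' Finset.univ p₁.1 (fun _ => ε • D), Finset.mem_univ, if_true,
        Finset.sum_const_zero, add_zero]
    have hb := congrFun (congrArg Prod.snd hx₁) p₁.2
    simp only at hb
    rw [hPB] at hb
    exact hεD0 (by rwa [add_eq_left] at hb)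
  · have hPA : ∑ y, P (p₁.1, y) = ε • D := by
      have e1 : ∀ y : Ω, ((p₁.1, y) = p₁) = (y = p₁.2) := fun y => by
        simp [Prod.ext_iff]
      have e2 : ∀ y : Ω, ((p₁.1, y) = p₂) = False := fun y => by
        simp [Prod.ext_iff]; intro h; exact absurd h hxy
      simp only [hPdef, e1, e2, if_false, Finset.sum_add_distrib,
        Finset.sum_ite_eq' Finset.univ p₁.2 (fun _ => ε • D), Finset.mem_univ, if_true,
        Finset.sum_const_zero, add_zero]
    have ha := congrFun (congrArg Prod.fst hx₁) p₁.1
    simp only at ha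
    rw [hPA] at ha
    exact hεD0 (by rwa [add_eq_left] at ha)
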